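/- arXiv:1212.6572 — 3 statements merged into one kernel-verified Lean document; each statement's English description precedes it below -/
import Mathlib

section
/- Let n ≥ 2 and let p₁, …, pₙ be positive integers that are pairwise coprime (gcd(pᵢ, pⱼ) = 1 for i ≠ j). Let F = {x ∈ ℝⁿ : xᵢ ≥ 0 for all i, and Σᵢ xᵢ/pᵢ = 1} be the facet of the simplex conv{0, p₁e₁, …, pₙeₙ} not containing the origin. Then lim_{k→∞} #(F ∩ (1/k)ℤⁿ) / k^{n-1} = 1/(n−1)!. -/
open Filter Topology Set

lemma asc_tendsto (m : ℕ) :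
    Tendsto (fun k : ℕ => (((k+1).ascFactorial m : ℕ) : ℝ) / (k:ℝ) ^ m) atTop (𝓝 1) := by
  induction m with
  | zero => simp
  | succ m ih =>
    have h0 : Tendsto (fun k : ℕ => (1 + (m:ℝ)) / k) atTop (𝓝 0) :=
      Tendsto.div_atTop tendsto_const_nhds tendsto_natCast_atTop_atTop
    have h1 : Tendsto (fun k : ℕ => ((k:ℝ) + 1 + m) / k) atTop (𝓝 1) := by
      have h2 := h0.const_add (1:ℝ)
      rw [add_zero] at h2
      refine h2.congr' ?_
      filter_upwards [eventually_ge_atTop 1] with k hk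
      have hk0 : (k:ℝ) ≠ 0 := by positivity
      field_simp
      ring
    have := h1.mul ih
    rw [one_mul] at this
    refine this.congr' ?_
    filter_upwards [eventually_ge_atTop 1] with k hk
    have hk0 : (k:ℝ) ≠ 0 := by positivity
    rw [Nat.ascFactorial_succ]
    push_cast
    field_simp
    ring

lemma choose_tendsto (m : ℕ) :
    Tendsto (fun k : ℕ => (((k+m).choose m : ℕ) : ℝ) / (k:ℝ) ^ m) atTop
      (𝓝 (1 / (m.factorial : ℝ))) := by
  have key : ∀ k : ℕ, (((k+m).choose m : ℕ) : ℝ) = (((k+1).ascFactorial m : ℕ) : ℝ) / m.factorial := by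
    intro k
    have h := Nat.ascFactorial_eq_factorial_mul_choose k m
    have hm : (m.factorial : ℝ) ≠ 0 := by positivity
    field_simp
    rw [mul_comm]
    exact_mod_cast (congrArg (Nat.cast (R := ℝ)) h).symm
  have := (asc_tendsto m).mul (tendsto_const_nhds (α := ℕ) (x := 1 / (m.factorial : ℝ)))
  rw [one_mul] at this
  refine this.congr fun k => ?_
  rw [key]
  ring


lemma card_eq (n k : ℕ) (hk : 1 ≤ k) (p : Fin n → ℕ) (hp : ∀ i, 0 < p i)
    (hcop : ∀ i j, i ≠ j → Nat.Coprime (p i) (p j)) :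
    ({x : Fin n → ℝ | (∀ i, 0 ≤ x i) ∧ (∑ i, x i / (p i : ℝ)) = 1 ∧
      ∀ i, ∃ z : ℤ, x i = (z : ℝ) / k}).ncard = (n + k - 1).choose k := by
  have hk0 : (k : ℝ) ≠ 0 := by positivity
  have hkpos : (0:ℝ) < k := by positivity
  set f : (Fin n → ℕ) → (Fin n → ℝ) := fun P i => ((p i : ℝ) * P i) / k with hf
  set T : Set (Fin n → ℕ) := {P | ∑ i, P i = k} with hT
  set q : Fin n → ℕ := fun i => ∏ j ∈ Finset.univ.erase i, p j with hq
  have hpq : ∀ i, p i * q i = ∏ j, p j := fun i =>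
    Finset.mul_prod_erase Finset.univ p (Finset.mem_univ i)
  have himg : {x : Fin n → ℝ | (∀ i, 0 ≤ x i) ∧ (∑ i, x i / (p i : ℝ)) = 1 ∧
      ∀ i, ∃ z : ℤ, x i = (z : ℝ) / k} = f '' T := by
    ext x
    constructor
    · rintro ⟨hx1, hx2, hx3⟩
      choose z hz using hx3
      -- z is nonnegative
      have hznn : ∀ i, 0 ≤ z i := by
        intro i
        have h := hx1 i
        rw [hz i] at h
        have : (0:ℝ) ≤ (z i : ℝ) := by
          by_contra hc
          push_neg at hc
          have : (z i : ℝ) / k < 0 := div_neg_of_neg_of_pos hc hkpos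
          linarith
        exact_mod_cast this
      -- the key sum identity over ℤ
      have hsumR : ∑ i, (z i : ℝ) * (q i : ℕ) = (k : ℝ) * (∏ j, p j : ℕ) := by
        have h2 := hx2
        have := congrArg (· * ((k : ℝ) * (∏ j, p j : ℕ))) h2
        simp only [Finset.sum_mul, one_mul] at this
        rw [← this]
        refine Finset.sum_congr rfl fun i _ => ?_
        rw [hz i]
        have hpi : ((p i : ℕ) : ℝ) ≠ 0 := by
          have := hp i; positivity
        have hPi : ((p i : ℕ) : ℝ) * ((q i : ℕ) : ℝ) = ((∏ j, p j : ℕ) : ℝ) := by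
          exact_mod_cast congrArg (Nat.cast (R := ℝ)) (hpq i)
        field_simp
        push_cast at hPi ⊢
        rw [← hPi]
        ring
      have hsumZ : ∑ i, z i * (q i : ℤ) = (k : ℤ) * (∏ j, p j : ℕ) := by
        exact_mod_cast hsumR
      -- divisibility
      have hdvd : ∀ j, (p j : ℤ) ∣ z j := by
        intro j
        have h1 : (p j : ℤ) ∣ ∑ i ∈ Finset.univ.erase j, z i * (q i : ℤ) := by
          refine Finset.dvd_sum fun i hi => ?_
          have hij : i ≠ j := Finset.ne_of_mem_erase hi
          have : (p j : ℤ) ∣ (q i : ℤ) := by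
            have : p j ∣ q i :=
              Finset.dvd_prod_of_mem p (by simp [Finset.mem_erase, hij.symm])
            exact_mod_cast Int.natCast_dvd_natCast.mpr this
          exact Dvd.dvd.mul_left this _
        have h2 : (p j : ℤ) ∣ (k : ℤ) * (∏ i, p i : ℕ) := by
          refine Dvd.dvd.mul_left ?_ _
          exact_mod_cast Int.natCast_dvd_natCast.mpr (Finset.dvd_prod_of_mem p (Finset.mem_univ j))
        have h3 : z j * (q j : ℤ) + ∑ i ∈ Finset.univ.erase j, z i * (q i : ℤ)
            = ∑ i, z i * (q i : ℤ) := Finset.add_sum_erase _ (fun i => z i * (q i : ℤ)) (Finset.mem_univ j)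
        have h4 : (p j : ℤ) ∣ z j * (q j : ℤ) := by
          have : z j * (q j : ℤ) = (k : ℤ) * (∏ i, p i : ℕ)
              - ∑ i ∈ Finset.univ.erase j, z i * (q i : ℤ) := by
            rw [← hsumZ, ← h3]; ring
          rw [this]
          exact dvd_sub h2 h1
        have hco : IsCoprime (p j : ℤ) (q j : ℤ) := by
          rw [Nat.isCoprime_iff_coprime]
          exact Nat.Coprime.prod_right fun l hl =>
            hcop j l (Finset.ne_of_mem_erase hl).symm
        exact hco.dvd_of_dvd_mul_right h4
      -- define y
      have hyz : ∀ j, ∃ y : ℕ, z j = (p j : ℤ) * y := by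
        intro j
        obtain ⟨c, hc⟩ := hdvd j
        have hpj : (0:ℤ) < p j := by exact_mod_cast hp j
        have hc0 : 0 ≤ c := by nlinarith [hznn j]
        exact ⟨c.toNat, by rw [hc, Int.toNat_of_nonneg hc0]⟩
      choose y hy using hyz
      refine ⟨y, ?_, ?_⟩
      · -- ∑ y = k
        have hPpos : (0:ℤ) < (∏ j, p j : ℕ) := by
          have : 0 < ∏ j, p j := Finset.prod_pos fun i _ => hp i
          exact_mod_cast this
        have : (∑ i, (y i : ℤ)) * (∏ j, p j : ℕ) = (k:ℤ) * (∏ j, p j : ℕ) := by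
          rw [Finset.sum_mul, ← hsumZ]
          refine Finset.sum_congr rfl fun i _ => ?_
          rw [hy i]
          have : ((p i : ℤ)) * (q i : ℤ) = ((∏ j, p j : ℕ) : ℤ) := by
            exact_mod_cast congrArg (Nat.cast (R := ℤ)) (hpq i)
          rw [← this]; ring
        have h5 : (∑ i, (y i : ℤ)) = (k:ℤ) := by
          exact mul_right_cancel₀ (ne_of_gt hPpos) this
        exact_mod_cast h5
      · funext i
        rw [hf]
        simp only
        rw [hz i, hy i]
        push_cast
        ring
    · rintro ⟨P, hP, rfl⟩
      refine ⟨fun i => ?_, ?_, fun i => ⟨(p i : ℤ) * P i, by push_cast; ring⟩⟩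
      · have := (hp i).le
        positivity
      · have : ∀ i, ((p i : ℝ) * P i) / k / (p i : ℝ) = (P i : ℝ) / k := by
          intro i
          have hpi : ((p i : ℕ) : ℝ) ≠ 0 := by have := hp i; positivity
          field_simp
        simp only [hf]
        rw [Finset.sum_congr rfl fun i _ => this i, ← Finset.sum_div]
        rw [show ∑ i, ((P i : ℕ) : ℝ) = ((∑ i, P i : ℕ) : ℝ) by push_cast; ring, hP]
        field_simp
  rw [himg]
  have hinj : InjOn f T := by
    intro P _ Q _ hPQ
    funext i
    have := congrFun hPQ i
    simp only [hf] at this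
    have hpi : ((p i : ℕ) : ℝ) ≠ 0 := by have := hp i; positivity
    field_simp at this
    norm_cast at this
  rw [ncard_image_of_injOn hinj, ← Nat.card_coe_set_eq]
  have e1 : ↥T ≃ {P : Fin n → ℕ // ∑ i, P i = k} := Equiv.subtypeEquivRight fun P => by simp [hT]
  rw [Nat.card_congr (e1.trans (Sym.equivNatSumOfFintype (Fin n) k).symm),
    Nat.card_eq_fintype_card, Sym.card_sym_eq_choose, Fintype.card_fin]

noncomputable section

/-- The number of points of the rescaled lattice `(1/k)ℤⁿ` lying on the facet
`F = {x : xᵢ ≥ 0, Σᵢ xᵢ/pᵢ = 1}` of the simplex `conv{0, p₁e₁, …, pₙeₙ}`, divided by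
`k^{n-1}`, tends to `1/(n-1)!` as `k → ∞`. -/
theorem facet_lattice_count (n : ℕ) (hn : 2 ≤ n) (p : Fin n → ℕ) (hp : ∀ i, 0 < p i)
    (hcop : ∀ i j, i ≠ j → Nat.Coprime (p i) (p j)) :
    Tendsto (fun k : ℕ =>
      (({x : Fin n → ℝ | (∀ i, 0 ≤ x i) ∧ (∑ i, x i / (p i : ℝ)) = 1 ∧
          ∀ i, ∃ z : ℤ, x i = (z : ℝ) / k}.ncard : ℝ)) / (k : ℝ) ^ (n - 1))
      atTop (𝓝 (1 / (Nat.factorial (n - 1) : ℝ))) := by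
  refine (choose_tendsto (n - 1)).congr' ?_
  filter_upwards [eventually_ge_atTop 1] with k hk
  rw [card_eq n k hk p hp hcop]
  congr 2
  have h1 : n + k - 1 = k + (n - 1) := by omega
  have h2 := Nat.choose_symm (Nat.le_add_left (n - 1) k)
  rw [Nat.add_sub_cancel] at h2
  rw [h1, ← h2]
end
end

section
/- Let h : [a, b] → ℝ be a convex, continuously differentiable function, let N be a positive even integer, set δ = (b − a)/N and x_j = a + jδ for j = 0, 1, …, N. Then the alternating sum satisfies |Σ_{j=0}^{N} (−1)^j h(x_j) − (h(a) + h(b))/2| ≤ δ · sup_{x ∈ [a,b]} |h'(x)|. -/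
open Set Finset

noncomputable section

private lemma alt_identity (f : ℕ → ℝ) (m : ℕ) :
    (∑ j ∈ Finset.range (2 * m + 1), (-1 : ℝ) ^ j * f j) - (f 0 + f (2 * m)) / 2
      = (1 / 2) * ∑ k ∈ Finset.range m, (f (2 * k + 2) - 2 * f (2 * k + 1) + f (2 * k)) := by
  induction m with
  | zero => simp
  | succ n ih =>
    have h1 : 2 * (n + 1) + 1 = (2 * n + 1) + 1 + 1 := by ring
    rw [h1, Finset.sum_range_succ, Finset.sum_range_succ (n := 2 * n + 1),
      Finset.sum_range_succ (n := n)]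
    have e1 : (-1 : ℝ) ^ (2 * n + 1) = -1 := Odd.neg_one_pow ⟨n, by ring⟩
    have e2 : (-1 : ℝ) ^ (2 * n + 1 + 1) = 1 := Even.neg_one_pow ⟨n + 1, by ring⟩
    have e3 : 2 * n + 1 + 1 = 2 * (n + 1) := by ring
    have e4 : 2 * n + 2 = 2 * (n + 1) := by ring
    rw [e1, e2, e3] at *
    have := ih
    rw [e4]
    linarith [this]

private lemma tele (g : ℕ → ℝ) (m : ℕ)
    (hmono : ∀ j, j + 2 ≤ 2 * (m + 1) → g j ≤ g (j + 1)) :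
    ∑ k ∈ Finset.range (m + 1), (g (2 * k + 1) - g (2 * k)) ≤ g (2 * m + 1) - g 0 := by
  induction m with
  | zero => simp
  | succ n ih =>
    rw [Finset.sum_range_succ]
    have h1 : g (2 * n + 1) ≤ g (2 * n + 2) :=
      hmono (2 * n + 1) (by omega)
    have h2 := ih (fun j hj => hmono j (by omega))
    have e : 2 * (n + 1) = 2 * n + 2 := by ring
    rw [e]
    have e2 : 2 * n + 2 + 1 = 2 * n + 2 + 1 := rfl
    linarith [h2]

/-- Alternating sum estimate for a convex `C¹` function along an arithmetic progression:
with `δ = (b-a)/N` and `x_j = a + jδ`, `N` even,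
`|Σ_{j=0}^N (−1)^j h(x_j) − (h(a) + h(b))/2| ≤ δ · sup_{[a,b]} |h'|`. -/
theorem alternating_sum_convex (a b : ℝ) (hab : a ≤ b) (h h' : ℝ → ℝ)
    (hconv : ConvexOn ℝ (Set.Icc a b) h)
    (hd : ∀ x ∈ Set.Icc a b, HasDerivWithinAt h (h' x) (Set.Icc a b) x)
    (hc : ContinuousOn h' (Set.Icc a b))
    (N : ℕ) (hN : 0 < N) (hNe : Even N) :
    |(∑ j ∈ Finset.range (N + 1), (-1 : ℝ) ^ j * h (a + j * ((b - a) / N)))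
        - (h a + h b) / 2|
      ≤ ((b - a) / N) * sSup ((fun x => |h' x|) '' Set.Icc a b) := by
  obtain ⟨m, rfl⟩ : ∃ m, N = 2 * m := by
    obtain ⟨r, hr⟩ := hNe; exact ⟨r, by omega⟩
  have hm : 0 < m := by omega
  set δ : ℝ := (b - a) / (2 * m : ℕ) with hδ
  set f : ℕ → ℝ := fun j => h (a + j * δ) with hf
  have hNne : ((2 * m : ℕ) : ℝ) ≠ 0 := by positivity
  have hf0 : f 0 = h a := by simp [hf]
  have hfN : f (2 * m) = h b := by
    have : a + (2 * m : ℕ) * δ = b := by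
      rw [hδ]; field_simp; ring
    simp only [hf]
    push_cast at this ⊢
    rw [this]
  have key := alt_identity f m
  rw [hf0, hfN] at key
  rw [show (∑ j ∈ Finset.range (2 * m + 1), (-1 : ℝ) ^ j * h (a + j * ((b - a) / (2 * m : ℕ))))
      = ∑ j ∈ Finset.range (2 * m + 1), (-1 : ℝ) ^ j * f j from rfl, key]
  -- M := sup of |h'|
  set M : ℝ := sSup ((fun x => |h' x|) '' Set.Icc a b) with hM
  have hbdd : BddAbove ((fun x => |h' x|) '' Set.Icc a b) :=
    (isCompact_Icc.image_of_continuousOn hc.abs).bddAbove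
  have hMle : ∀ x ∈ Set.Icc a b, |h' x| ≤ M := fun x hx => le_csSup hbdd ⟨x, hx, rfl⟩
  rcases eq_or_lt_of_le hab with heq | hlt
  · -- a = b : everything is zero
    subst heq
    have hδ0 : δ = 0 := by simp [hδ]
    have : ∀ k, f (2 * k + 2) - 2 * f (2 * k + 1) + f (2 * k) = 0 := by
      intro k; simp [hf, hδ0]; ring
    simp [this, hδ0]
  · have hδpos : 0 < δ := by
      rw [hδ]; apply div_pos (by linarith) (by positivity)
    have hmem : ∀ j : ℕ, j ≤ 2 * m → a + j * δ ∈ Set.Icc a b := by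
      intro j hj
      constructor
      · nlinarith [Nat.cast_nonneg (α := ℝ) j, hδpos]
      · have : (j : ℝ) ≤ (2 * m : ℕ) := by exact_mod_cast hj
        have hb' : a + ((2 * m : ℕ) : ℝ) * δ = b := by rw [hδ]; field_simp; ring
        nlinarith
    set g : ℕ → ℝ := fun j => f (j + 1) - f j with hg
    -- adjacent monotonicity of g
    have hgmono : ∀ j, j + 2 ≤ 2 * m → g j ≤ g (j + 1) := by
      intro j hj
      have hx : a + j * δ ∈ Set.Icc a b := hmem j (by omega)
      have hz : a + (j + 2 : ℕ) * δ ∈ Set.Icc a b := hmem (j + 2) hj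
      have h1 : (a + j * δ) < a + (j + 1 : ℕ) * δ := by
        push_cast; nlinarith
      have h2 : (a + (j + 1 : ℕ) * δ) < a + (j + 2 : ℕ) * δ := by
        push_cast; nlinarith
      have := hconv.slope_mono_adjacent hx hz h1 h2
      have d1 : (a + (j + 1 : ℕ) * δ) - (a + j * δ) = δ := by push_cast; ring
      have d2 : (a + (j + 2 : ℕ) * δ) - (a + (j + 1 : ℕ) * δ) = δ := by push_cast; ring
      rw [d1, d2] at this
      have h3 := (div_le_div_iff_of_pos_right hδpos).mp this
      simp only [hg, hf]
      push_cast at h3 ⊢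
      ring_nf at h3 ⊢
      linarith
    -- bound on |g j|
    have hgbound : ∀ j, j + 1 ≤ 2 * m → |g j| ≤ M * δ := by
      intro j hj
      have hx : a + j * δ ∈ Set.Icc a b := hmem j (by omega)
      have hy : a + (j + 1 : ℕ) * δ ∈ Set.Icc a b := hmem (j + 1) hj
      have := Convex.norm_image_sub_le_of_norm_hasDerivWithin_le hd
        (fun x hx => hMle x hx) (convex_Icc a b) hx hy
      have d1 : (a + (j + 1 : ℕ) * δ) - (a + j * δ) = δ := by push_cast; ring
      rw [d1] at this
      simpa [hg, hf, Real.norm_eq_abs, abs_of_pos hδpos] using this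
    -- nonneg terms
    have hterm : ∀ k ∈ Finset.range m, 0 ≤ f (2 * k + 2) - 2 * f (2 * k + 1) + f (2 * k) := by
      intro k hk
      rw [Finset.mem_range] at hk
      have := hgmono (2 * k) (by omega)
      simp only [hg] at this
      have e : 2 * k + 1 + 1 = 2 * k + 2 := by ring
      rw [e] at this
      linarith
    have hsum_nonneg : 0 ≤ ∑ k ∈ Finset.range m, (f (2 * k + 2) - 2 * f (2 * k + 1) + f (2 * k)) :=
      Finset.sum_nonneg hterm
    -- telescoping bound
    obtain ⟨m', rfl⟩ : ∃ m', m = m' + 1 := ⟨m - 1, by omega⟩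
    have hsum_eq : ∑ k ∈ Finset.range (m' + 1), (f (2 * k + 2) - 2 * f (2 * k + 1) + f (2 * k))
        = ∑ k ∈ Finset.range (m' + 1), (g (2 * k + 1) - g (2 * k)) := by
      apply Finset.sum_congr rfl
      intro k _
      simp only [hg]
      ring_nf
    have htele := tele g m' (fun j hj => hgmono j (by omega))
    have hb1 : |g (2 * m' + 1)| ≤ M * δ := hgbound (2 * m' + 1) (by omega)
    have hb0 : |g 0| ≤ M * δ := hgbound 0 (by omega)
    have hub : ∑ k ∈ Finset.range (m' + 1), (f (2 * k + 2) - 2 * f (2 * k + 1) + f (2 * k))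
        ≤ 2 * (M * δ) := by
      rw [hsum_eq]
      have := abs_le.mp hb1
      have := abs_le.mp hb0
      linarith
    rw [abs_of_nonneg (by positivity)]
    have : (1 / 2 : ℝ) * ∑ k ∈ Finset.range (m' + 1),
        (f (2 * k + 2) - 2 * f (2 * k + 1) + f (2 * k)) ≤ M * δ := by linarith
    calc (1 / 2 : ℝ) * ∑ k ∈ Finset.range (m' + 1),
        (f (2 * k + 2) - 2 * f (2 * k + 1) + f (2 * k)) ≤ M * δ := this
      _ = δ * M := by ring
      _ = ((b - a) / (2 * (m' + 1) : ℕ)) * M := by rw [hδ]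
end
end

section
/- Let P ⊂ ℝⁿ be an integer polytope. There exists a constant C depending only on n and P such that for every positive integer k, the number of lattice points p ∈ (1/k)ℤⁿ whose box □_k(p) = [p₁, p₁ + 1/k] × ⋯ × [pₙ, pₙ + 1/k] intersects the boundary ∂P of P is at most C·k^{n−1}. In particular, the set F_k of face points of P (those p ∈ P̄ ∩ (1/k)ℤⁿ with □_k(p) ⊄ P̄ and □_k(p) ∩ P̄ ≠ {p}) has at most C·k^{n−1} elements. -/
open MeasureTheory Pointwise


open Set

noncomputable section

/-- An integer polytope in `ℝⁿ`: the convex hull of a finite set of points with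
integer coordinates (the set `Pbar` is the closed polytope `P̄`). -/
def IsIntegerPolytope (n : ℕ) (Pbar : Set (Fin n → ℝ)) : Prop :=
  ∃ V : Finset (Fin n → ℝ), (∀ v ∈ V, ∀ i, ∃ z : ℤ, v i = (z : ℝ)) ∧
    Pbar = convexHull ℝ (V : Set (Fin n → ℝ))

/-- `p` belongs to the rescaled lattice `(1/k)ℤⁿ`. -/
def LatticePt (n k : ℕ) (p : Fin n → ℝ) : Prop :=
  ∀ i, ∃ z : ℤ, p i = (z : ℝ) / k

/-- The box `□_k(p) = [p₁, p₁ + 1/k] × ⋯ × [pₙ, pₙ + 1/k]` with corner point `p`. -/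
def latticeBox (n k : ℕ) (p : Fin n → ℝ) : Set (Fin n → ℝ) :=
  Set.Icc p (fun i => p i + 1 / k)

/-- The face lattice points
`F_k = {p ∈ P̄ ∩ (1/k)ℤⁿ : □_k(p) ⊄ P̄ and □_k(p) ∩ P̄ ≠ {p}}`. -/
def facePts (n k : ℕ) (Pbar : Set (Fin n → ℝ)) : Set (Fin n → ℝ) :=
  {p : Fin n → ℝ | p ∈ Pbar ∧ LatticePt n k p ∧
    ¬ latticeBox n k p ⊆ Pbar ∧ latticeBox n k p ∩ Pbar ≠ {p}}

-- connectedness lemma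
lemma preconn_inter_frontier {α : Type*} [TopologicalSpace α] {s t : Set α}
    (hs : IsPreconnected s) (h1 : (s ∩ t).Nonempty) (h2 : (s \ t).Nonempty) :
    (s ∩ frontier t).Nonempty := by
  by_contra h
  rw [Set.not_nonempty_iff_eq_empty] at h
  have hfr : ∀ x ∈ s, x ∉ frontier t := fun x hx hx' => by
    have : x ∈ s ∩ frontier t := ⟨hx, hx'⟩
    simp [h] at this
  have hsub : s ⊆ interior t ∪ interior tᶜ := by
    intro x hx
    by_cases hxc : x ∈ closure t
    · left
      by_contra h'
      exact hfr x hx ⟨hxc, h'⟩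
    · right
      rw [interior_compl]
      exact hxc
  have hu : (s ∩ interior t).Nonempty := by
    obtain ⟨x, hxs, hxt⟩ := h1
    refine ⟨x, hxs, ?_⟩
    by_contra h'
    exact hfr x hxs ⟨subset_closure hxt, h'⟩
  have hv : (s ∩ interior tᶜ).Nonempty := by
    obtain ⟨x, hxs, hxt⟩ := h2
    refine ⟨x, hxs, ?_⟩
    rw [interior_compl]
    intro hxc
    exact hfr x hxs ⟨hxc, fun h' => hxt (interior_subset h')⟩
  obtain ⟨x, -, hx1, hx2⟩ := hs _ _ isOpen_interior isOpen_interior hsub hu hv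
  exact (interior_subset hx2) (interior_subset hx1)

-- geometric series bound
lemma pow_sub_pow_bound (n : ℕ) {s : ℝ} (h0 : 0 ≤ s) (h1 : s ≤ 1) :
    (1+s)^n - (1-s)^n ≤ 2*s*(n*(1+s)^(n-1)) := by
  have key := geom_sum₂_mul (1+s) (1-s) n
  rw [show (1+s) - (1-s) = 2*s by ring] at key
  rw [← key]
  have hsum : (∑ i ∈ Finset.range n, (1+s)^i * (1-s)^(n-1-i)) ≤ n * (1+s)^(n-1) := by
    calc (∑ i ∈ Finset.range n, (1+s)^i * (1-s)^(n-1-i))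
        ≤ ∑ i ∈ Finset.range n, (1+s)^(n-1) := by
          refine Finset.sum_le_sum fun i hi => ?_
          have hi' := Finset.mem_range.1 hi
          have hle : (1-s)^(n-1-i) ≤ (1+s)^(n-1-i) :=
            pow_le_pow_left₀ (by linarith) (by linarith) _
          have : (1+s)^i * (1-s)^(n-1-i) ≤ (1+s)^i * (1+s)^(n-1-i) :=
            mul_le_mul_of_nonneg_left hle (by positivity)
          refine this.trans ?_
          rw [← pow_add]
          have : i + (n-1-i) ≤ n - 1 := by omega
          exact pow_le_pow_right₀ (by linarith) this
      _ = n * (1+s)^(n-1) := by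
          rw [Finset.sum_const, Finset.card_range, nsmul_eq_mul]
  have h2s : 0 ≤ 2*s := by linarith
  calc (∑ i ∈ Finset.range n, (1+s)^i * (1-s)^(n-1-i)) * (2*s)
      ≤ (n * (1+s)^(n-1)) * (2*s) := mul_le_mul_of_nonneg_right hsum h2s
    _ = 2*s*(n*(1+s)^(n-1)) := by ring

set_option maxHeartbeats 2000000 in
lemma count_lemma (n : ℕ) (hn : 0 < n) (K : Set (Fin n → ℝ))
    (hKcpt : IsCompact K) (hKconv : Convex ℝ K) (x0 : Fin n → ℝ) (r : ℝ) (hr : 0 < r)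
    (hball : Metric.closedBall x0 r ⊆ interior K) :
    ∃ C : ℝ, 0 ≤ C ∧ ∀ k : ℕ, 0 < k → ∀ F : Finset (Fin n → ℝ),
      (∀ p ∈ F, LatticePt n k p ∧ (latticeBox n k p ∩ frontier K).Nonempty) →
      (F.card : ℝ) ≤ C * (k:ℝ)^(n-1) := by
  classical
  set Cs : Set (Fin n → ℝ) := (fun z => x0 + z) ⁻¹' K with hCsdef
  have hx0K : x0 ∈ K := interior_subset (hball (Metric.mem_closedBall_self hr.le))
  have hC0 : (0 : Fin n → ℝ) ∈ Cs := by
    show x0 + 0 ∈ K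
    simpa using hx0K
  have hCconv : Convex ℝ Cs := by
    intro z1 hz1 z2 hz2 a b ha hb hab
    have hmem := hKconv hz1 hz2 ha hb hab
    show x0 + (a • z1 + b • z2) ∈ K
    obtain rfl : b = 1 - a := by linarith
    have heq : x0 + (a • z1 + (1-a) • z2) = a • (x0 + z1) + (1-a) • (x0 + z2) := by
      module
    rw [heq]; exact hmem
  have hCball : Metric.closedBall 0 r ⊆ Cs := by
    intro z hz
    simp only [Metric.mem_closedBall, dist_zero_right] at hz
    have hmem : x0 + z ∈ Metric.closedBall x0 r := by
      simp only [Metric.mem_closedBall, dist_eq_norm, add_sub_cancel_left]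
      exact hz
    show x0 + z ∈ K
    exact interior_subset (hball hmem)
  have hCim : Cs = (fun y => -x0 + y) '' K := by
    ext z
    constructor
    · intro hz
      exact ⟨x0 + z, hz, by module⟩
    · rintro ⟨y, hy, rfl⟩
      show x0 + (-x0 + y) ∈ K
      simpa [add_neg_cancel_left] using hy
  have hCcpt : IsCompact Cs := by
    rw [hCim]
    exact hKcpt.image (continuous_const.add continuous_id)
  have hμC : volume Cs = volume K := measure_preimage_add volume x0 K
  have hsmul_sub : ∀ a b : ℝ, 0 ≤ a → a ≤ b → a • Cs ⊆ b • Cs := by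
    intro a b ha hab x hx
    by_cases hb0 : b = 0
    · have ha0 : a = 0 := le_antisymm (hb0 ▸ hab) ha
      rw [ha0] at hx; rwa [hb0]
    · have hbpos : 0 < b := lt_of_le_of_ne (ha.trans hab) (Ne.symm hb0)
      rcases hx with ⟨c, hc, rfl⟩
      have heq : a • c = b • ((b⁻¹ * a) • c) := by
        rw [smul_smul, ← mul_assoc, mul_inv_cancel₀ hb0, one_mul]
      show a • c ∈ b • Cs
      rw [heq]
      refine smul_mem_smul_set (hCconv.smul_mem_of_zero_mem hC0 hc ⟨by positivity, ?_⟩)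
      rw [← div_eq_inv_mul, div_le_one hbpos]
      exact hab
  have hout : ∀ s : ℝ, 0 < s → ∀ x y : Fin n → ℝ, y ∈ K → dist x y ≤ s * r →
      -x0 + x ∈ (1+s) • Cs := by
    intro s hs x y hy hd
    have h1 : -x0 + y ∈ Cs := by
      show x0 + (-x0 + y) ∈ K
      simpa [add_neg_cancel_left] using hy
    have h2 : x - y ∈ s • Cs := by
      have hmem : s⁻¹ • (x - y) ∈ Metric.closedBall 0 r := by
        simp only [Metric.mem_closedBall, dist_zero_right, norm_smul, Real.norm_eq_abs,
          abs_of_pos (inv_pos.2 hs)]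
        have hxy : ‖x - y‖ ≤ s * r := by rwa [← dist_eq_norm]
        calc s⁻¹ * ‖x - y‖ ≤ s⁻¹ * (s * r) :=
              mul_le_mul_of_nonneg_left hxy (inv_pos.2 hs).le
          _ = r := by field_simp
      refine ⟨_, hCball hmem, ?_⟩
      show s • (s⁻¹ • (x - y)) = x - y
      rw [smul_smul, mul_inv_cancel₀ hs.ne', one_smul]
    rw [hCconv.add_smul zero_le_one hs.le, one_smul]
    have heq : (-x0 + x) = (-x0 + y) + (x - y) := by abel
    rw [heq]
    exact Set.add_mem_add h1 h2
  have hin : ∀ s : ℝ, 0 < s → s ≤ 1 → ∀ x : Fin n → ℝ, -x0 + x ∈ (1-s) • Cs →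
      Metric.closedBall x (s * r) ⊆ K := by
    intro s hs0 hs1 x hx w hw
    rcases hx with ⟨c, hc, hxc0⟩
    have hxc : (1-s) • c = -x0 + x := hxc0
    set u := s⁻¹ • (w - x) with hu_def
    have hu : u ∈ Cs := by
      apply hCball
      simp only [Metric.mem_closedBall, dist_zero_right, hu_def, norm_smul, Real.norm_eq_abs,
        abs_of_pos (inv_pos.2 hs0)]
      have hwx : ‖w - x‖ ≤ s * r := by rwa [← dist_eq_norm, ← Metric.mem_closedBall]
      calc s⁻¹ * ‖w - x‖ ≤ s⁻¹ * (s * r) :=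
            mul_le_mul_of_nonneg_left hwx (inv_pos.2 hs0).le
        _ = r := by field_simp
    have hsu : s • u = w - x := by
      rw [hu_def, smul_smul, mul_inv_cancel₀ hs0.ne', one_smul]
    have hcomb := hKconv hc hu (by linarith : (0:ℝ) ≤ 1 - s) hs0.le (by ring)
    have heq : (1-s) • (x0 + c) + s • (x0 + u) = x0 + ((1-s) • c + s • u) := by
      rw [smul_add, smul_add]
      module
    rw [heq, hsu, hxc] at hcomb
    have : x0 + (-x0 + x + (w - x)) = w := by abel
    rwa [this] at hcomb
  -- constants
  set v : ℝ := (volume K).toReal with hv_def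
  have hv0 : 0 ≤ v := ENNReal.toReal_nonneg
  have hKfin : volume K ≠ ⊤ := hKcpt.measure_lt_top.ne
  have hvK : volume K = ENNReal.ofReal v := (ENNReal.ofReal_toReal hKfin).symm
  set C1 : ℝ := 2*n*v*(1+2/r)^(n-1)*(2/r) with hC1_def
  set C2 : ℝ := (1+2/r)^n * v * (2/r) with hC2_def
  have hC10 : 0 ≤ C1 := by
    have h2r : (0:ℝ) ≤ 2/r := by positivity
    have : (0:ℝ) ≤ (1+2/r)^(n-1) := by positivity
    positivity
  have hC20 : 0 ≤ C2 := by positivity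
  refine ⟨C1 + C2, by linarith, ?_⟩
  intro k hk F hF
  have hk0 : (0:ℝ) < k := Nat.cast_pos.2 hk
  have hk1 : (1:ℝ) ≤ k := Nat.one_le_cast.2 hk
  set s : ℝ := 2 / (r * k) with hs_def
  have hs0 : 0 < s := by positivity
  have hsr : s * r = 2 / k := by
    rw [hs_def]; field_simp
  have hs2r : s ≤ 2/r := by
    rw [hs_def]
    gcongr
    nlinarith
  -- boxes
  set obox : (Fin n → ℝ) → Set (Fin n → ℝ) :=
    fun p => univ.pi (fun i => Ioo (p i) (p i + 1/(k:ℝ))) with hobox_def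
  have hobox_sub : ∀ p, obox p ⊆ latticeBox n k p := by
    intro p x hx
    constructor
    · intro i; exact (hx i (mem_univ i)).1.le
    · intro i; exact (hx i (mem_univ i)).2.le
  have hdist : ∀ p x y : Fin n → ℝ, x ∈ latticeBox n k p → y ∈ latticeBox n k p →
      dist x y ≤ 1/(k:ℝ) := by
    intro p x y hx hy
    rw [dist_pi_le_iff (by positivity)]
    intro i
    have h1 := hx.1 i
    have h2 := hx.2 i
    have h3 := hy.1 i
    have h4 := hy.2 i
    simp only at h1 h2 h3 h4
    rw [Real.dist_eq, abs_le]
    constructor <;> linarith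
  have hboxO : ∀ p ∈ F, ∀ x ∈ obox p, -x0 + x ∈ (1+s) • Cs := by
    intro p hp x hx
    obtain ⟨hlat, y, hybox, hyfr⟩ := hF p hp
    have hyK : y ∈ K := by
      have h' := frontier_subset_closure hyfr
      rwa [hKcpt.isClosed.closure_eq] at h'
    have hd : dist x y ≤ 1/(k:ℝ) := hdist p x y (hobox_sub p hx) hybox
    refine hout s hs0 x y hyK (hd.trans ?_)
    rw [hsr]
    gcongr
    norm_num
  have hboxmeas : ∀ p : Fin n → ℝ, MeasurableSet (obox p) :=
    fun p => MeasurableSet.univ_pi (fun i => measurableSet_Ioo)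
  have hpd : (↑F : Set (Fin n → ℝ)).PairwiseDisjoint obox := by
    intro p hp q hq hpq
    have hex : ∃ i, p i ≠ q i := by
      by_contra h'
      push_neg at h'
      exact hpq (funext h')
    obtain ⟨i, hi⟩ := hex
    obtain ⟨a, hai⟩ := (hF p hp).1 i
    obtain ⟨b, hbi⟩ := (hF q hq).1 i
    rw [Function.onFun, Set.disjoint_left]
    intro x hxp hxq
    have h1 := hxp i (mem_univ i)
    have h2 := hxq i (mem_univ i)
    simp only [mem_Ioo] at h1 h2
    have hab : a ≠ b := by
      intro h
      exact hi (by rw [hai, hbi, h])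
    rcases lt_or_gt_of_ne hab with h | h
    · have hint : (a:ℝ) + 1 ≤ (b:ℝ) := by exact_mod_cast Int.add_one_le_iff.2 h
      have hle : p i + 1/(k:ℝ) ≤ q i := by
        rw [hai, hbi]
        rw [← add_div]
        gcongr
      linarith [h1.2, h2.1]
    · have hint : (b:ℝ) + 1 ≤ (a:ℝ) := by exact_mod_cast Int.add_one_le_iff.2 h
      have hle : q i + 1/(k:ℝ) ≤ p i := by
        rw [hai, hbi]
        rw [← add_div]
        gcongr
      linarith [h1.1, h2.2]
  -- measure part
  have hUmeas : MeasurableSet (⋃ p ∈ F, obox p) :=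
    MeasurableSet.biUnion F.countable_toSet (fun p _ => hboxmeas p)
  have hUeq : volume (⋃ p ∈ F, obox p) = F.card * ENNReal.ofReal ((1/(k:ℝ))^n) := by
    rw [measure_biUnion_finset hpd (fun p _ => hboxmeas p)]
    have hvol : ∀ p ∈ F, volume (obox p) = ENNReal.ofReal ((1/(k:ℝ))^n) := by
      intro p _
      rw [hobox_def]
      rw [Real.volume_pi_Ioo]
      simp only [add_sub_cancel_left]
      rw [Finset.prod_const, Finset.card_univ, Fintype.card_fin,
        ← ENNReal.ofReal_pow (by positivity)]
    rw [Finset.sum_congr rfl hvol, Finset.sum_const, nsmul_eq_mul]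
  have hUsubO : (⋃ p ∈ F, obox p) ⊆ (fun z => -x0 + z) ⁻¹' ((1+s) • Cs) :=
    iUnion₂_subset fun p hp x hx => hboxO p hp x hx
  have hμO : volume ((fun z => -x0 + z) ⁻¹' ((1+s) • Cs))
      = ENNReal.ofReal ((1+s)^n) * volume K := by
    rw [measure_preimage_add volume (-x0) _,
      Measure.addHaar_smul_of_nonneg volume (by linarith : (0:ℝ) ≤ 1+s),
      Module.finrank_fin_fun, hμC]
  have houtnn : (0:ℝ) ≤ (1+s)^n := by positivity
  have hkpow : (k:ℝ)^n = (k:ℝ)^(n-1) * k := by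
    conv_lhs => rw [show n = (n-1)+1 by omega]
    rw [pow_succ]
  have hknn : (0:ℝ) ≤ (k:ℝ)^(n-1) := by positivity
  by_cases hcase : 2 ≤ r * k
  · -- case A : inner body nonempty
    have hs1 : s ≤ 1 := by
      rw [hs_def, div_le_one (by positivity)]; exact hcase
    set I : Set (Fin n → ℝ) := (fun z => -x0 + z) ⁻¹' ((1-s) • Cs) with hI_def
    have hImeas : MeasurableSet I := by
      have hcp : IsCompact ((1-s) • Cs) := by
        rw [← Set.image_smul]
        exact hCcpt.image (continuous_const_smul _)
      exact hcp.isClosed.measurableSet.preimage (measurable_const_add _)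
    have hdisjI : Disjoint I (⋃ p ∈ F, obox p) := by
      rw [Set.disjoint_left]
      intro x hxI hxU
      simp only [mem_iUnion] at hxU
      obtain ⟨p, hp, hx⟩ := hxU
      obtain ⟨-, y, hybox, hyfr⟩ := hF p hp
      have hcb := hin s hs0 hs1 x hxI
      have hdxy : dist x y ≤ 1/(k:ℝ) := hdist p x y (hobox_sub p hx) hybox
      have hyint : y ∈ interior K := by
        have hbK : Metric.ball y (1/(k:ℝ)) ⊆ K := by
          intro z hz
          apply hcb
          rw [Metric.mem_closedBall]
          have h1 := (Metric.mem_ball.1 hz).le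
          calc dist z x ≤ dist z y + dist y x := dist_triangle z y x
            _ ≤ 1/(k:ℝ) + 1/(k:ℝ) := by rw [dist_comm y x]; linarith
            _ = s * r := by rw [hsr]; ring
        exact mem_interior.2 ⟨_, hbK, Metric.isOpen_ball, Metric.mem_ball_self (by positivity)⟩
      have hyfr' := hKcpt.isClosed.frontier_eq ▸ hyfr
      exact hyfr'.2 hyint
    have hIsubO : I ⊆ (fun z => -x0 + z) ⁻¹' ((1+s) • Cs) :=
      preimage_mono (hsmul_sub (1-s) (1+s) (by linarith) (by linarith))
    have hμI : volume I = ENNReal.ofReal ((1-s)^n) * volume K := by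
      rw [hI_def, measure_preimage_add volume (-x0) _,
        Measure.addHaar_smul_of_nonneg volume (by linarith : (0:ℝ) ≤ 1-s),
        Module.finrank_fin_fun, hμC]
    have hchain : volume I + volume (⋃ p ∈ F, obox p)
        ≤ volume ((fun z => -x0 + z) ⁻¹' ((1+s) • Cs)) := by
      rw [← measure_union hdisjI hUmeas]
      exact measure_mono (union_subset hIsubO hUsubO)
    rw [hμI, hUeq, hμO, hvK] at hchain
    have hinnn : (0:ℝ) ≤ (1-s)^n := pow_nonneg (by linarith) n
    have hbnn : (0:ℝ) ≤ (1/(k:ℝ))^n := by positivity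
    have hineq : ENNReal.ofReal ((1-s)^n * v + (F.card:ℝ) * (1/(k:ℝ))^n)
        ≤ ENNReal.ofReal ((1+s)^n * v) := by
      rw [ENNReal.ofReal_add (mul_nonneg hinnn hv0) (mul_nonneg (Nat.cast_nonneg _) hbnn),
        ENNReal.ofReal_mul hinnn, ENNReal.ofReal_mul (Nat.cast_nonneg _),
        ENNReal.ofReal_mul houtnn, ENNReal.ofReal_natCast]
      exact hchain
    have hreal := (ENNReal.ofReal_le_ofReal_iff (mul_nonneg houtnn hv0)).1 hineq
    have hpow := pow_sub_pow_bound n hs0.le hs1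
    have hstep : (F.card : ℝ) * (1/(k:ℝ))^n ≤ (2*s*(n*(1+s)^(n-1))) * v := by
      have h' : (F.card : ℝ) * (1/(k:ℝ))^n ≤ ((1+s)^n - (1-s)^n) * v := by nlinarith
      exact h'.trans (mul_le_mul_of_nonneg_right hpow hv0)
    have hcard : (F.card : ℝ) ≤ (2*s*(n*(1+s)^(n-1))) * v * (k:ℝ)^n := by
      have heq : (F.card : ℝ) = ((F.card : ℝ) * (1/(k:ℝ))^n) * (k:ℝ)^n := by
        rw [one_div, inv_pow, mul_assoc, inv_mul_cancel₀ (by positivity), mul_one]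
      rw [heq]
      exact mul_le_mul_of_nonneg_right hstep (by positivity)
    have hsk : s * (k:ℝ)^n = (2/r) * (k:ℝ)^(n-1) := by
      rw [hkpow, hs_def]
      field_simp
    have h1s : (1+s)^(n-1) ≤ (1+2/r)^(n-1) :=
      pow_le_pow_left₀ (by linarith) (by linarith) _
    have hfinal : (2*s*(n*(1+s)^(n-1))) * v * (k:ℝ)^n ≤ C1 * (k:ℝ)^(n-1) := by
      calc (2*s*(n*(1+s)^(n-1))) * v * (k:ℝ)^n
          = 2*(n:ℝ)*v*(1+s)^(n-1) * (s * (k:ℝ)^n) := by ring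
        _ = 2*(n:ℝ)*v*(1+s)^(n-1) * ((2/r) * (k:ℝ)^(n-1)) := by rw [hsk]
        _ ≤ 2*(n:ℝ)*v*(1+2/r)^(n-1) * ((2/r) * (k:ℝ)^(n-1)) := by
            have hnn1 : (0:ℝ) ≤ 2*(n:ℝ)*v := by positivity
            have hnn2 : (0:ℝ) ≤ (2/r) * (k:ℝ)^(n-1) := by positivity
            nlinarith [mul_le_mul_of_nonneg_left h1s hnn1]
        _ = C1 * (k:ℝ)^(n-1) := by rw [hC1_def]; ring
    have : (F.card : ℝ) ≤ C1 * (k:ℝ)^(n-1) := hcard.trans hfinal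
    nlinarith [mul_nonneg hC20 hknn]
  · -- case B : small k
    push_neg at hcase
    have hklt : (k:ℝ) ≤ 2/r := by
      rw [le_div_iff₀ hr]
      nlinarith
    have hchain : volume (⋃ p ∈ F, obox p)
        ≤ volume ((fun z => -x0 + z) ⁻¹' ((1+s) • Cs)) := measure_mono hUsubO
    rw [hUeq, hμO, hvK] at hchain
    have hbnn : (0:ℝ) ≤ (1/(k:ℝ))^n := by positivity
    have hineq : ENNReal.ofReal ((F.card:ℝ) * (1/(k:ℝ))^n)
        ≤ ENNReal.ofReal ((1+s)^n * v) := by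
      rw [ENNReal.ofReal_mul (Nat.cast_nonneg _), ENNReal.ofReal_mul houtnn,
        ENNReal.ofReal_natCast]
      exact hchain
    have hreal := (ENNReal.ofReal_le_ofReal_iff (mul_nonneg houtnn hv0)).1 hineq
    have hcard : (F.card : ℝ) ≤ (1+s)^n * v * (k:ℝ)^n := by
      have heq : (F.card : ℝ) = ((F.card : ℝ) * (1/(k:ℝ))^n) * (k:ℝ)^n := by
        rw [one_div, inv_pow, mul_assoc, inv_mul_cancel₀ (by positivity), mul_one]
      rw [heq]
      exact mul_le_mul_of_nonneg_right hreal (by positivity)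
    have h1s : (1+s)^n ≤ (1+2/r)^n :=
      pow_le_pow_left₀ (by linarith) (by linarith) _
    have hfinal : (1+s)^n * v * (k:ℝ)^n ≤ C2 * (k:ℝ)^(n-1) := by
      calc (1+s)^n * v * (k:ℝ)^n
          = (1+s)^n * v * ((k:ℝ)^(n-1) * k) := by rw [hkpow]
        _ ≤ (1+2/r)^n * v * ((k:ℝ)^(n-1) * (2/r)) := by
            have e1 : (1+s)^n * v ≤ (1+2/r)^n * v := mul_le_mul_of_nonneg_right h1s hv0
            have e2 : (k:ℝ)^(n-1) * (k:ℝ) ≤ (k:ℝ)^(n-1) * (2/r) :=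
              mul_le_mul_of_nonneg_left hklt hknn
            have e3 : (0:ℝ) ≤ (1+s)^n * v := mul_nonneg houtnn hv0
            have e4 : (0:ℝ) ≤ (k:ℝ)^(n-1) * (k:ℝ) := by positivity
            nlinarith
        _ = C2 * (k:ℝ)^(n-1) := by rw [hC2_def]; ring
    have : (F.card : ℝ) ≤ C2 * (k:ℝ)^(n-1) := hcard.trans hfinal
    nlinarith [mul_nonneg hC10 hknn]

/-- The number of lattice boxes meeting the boundary `∂P` of an integer polytope is
`O(k^{n-1})`; in particular the set of face points `F_k` has at most `C k^{n-1}`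
elements. -/
theorem boundary_box_count (n : ℕ) (Pbar : Set (Fin n → ℝ))
    (hP : IsIntegerPolytope n Pbar) (hfull : (interior Pbar).Nonempty) :
    ∃ C : ℝ, ∀ k : ℕ, 0 < k →
      (({p : Fin n → ℝ | LatticePt n k p ∧
          (latticeBox n k p ∩ frontier Pbar).Nonempty}.ncard : ℝ)
        ≤ C * (k : ℝ) ^ (n - 1)) ∧
      ((facePts n k Pbar).ncard : ℝ) ≤ C * (k : ℝ) ^ (n - 1) := by
  classical
  rcases Nat.eq_zero_or_pos n with hn0 | hn
  · subst hn0
    refine ⟨1, fun k hk => ?_⟩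
    have hPne : Pbar.Nonempty := hfull.mono interior_subset
    have hPuniv : Pbar = univ := hPne.eq_univ
    constructor
    · have hempty : {p : Fin 0 → ℝ | LatticePt 0 k p ∧
          (latticeBox 0 k p ∩ frontier Pbar).Nonempty} = ∅ := by
        rw [hPuniv, frontier_univ]
        simp
      rw [hempty]
      simp
    · have hempty : facePts 0 k Pbar = ∅ := by
        rw [hPuniv]
        ext p
        simp [facePts]
      rw [hempty]
      simp
  · obtain ⟨V, hVint, hV⟩ := hP
    have hKcpt : IsCompact Pbar := by rw [hV]; exact V.finite_toSet.isCompact_convexHull (𝕜 := ℝ)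
    have hKconv : Convex ℝ Pbar := by rw [hV]; exact convex_convexHull ℝ _
    obtain ⟨x0, hx0⟩ := hfull
    obtain ⟨ε, hε, hball⟩ := Metric.isOpen_iff.1 isOpen_interior x0 hx0
    have hcb : Metric.closedBall x0 (ε/2) ⊆ interior Pbar :=
      (Metric.closedBall_subset_ball (by linarith)).trans hball
    obtain ⟨C, hC0, hC⟩ := count_lemma n hn Pbar hKcpt hKconv x0 (ε/2) (by linarith) hcb
    refine ⟨C, fun k hk => ?_⟩
    set S := {p : Fin n → ℝ | LatticePt n k p ∧
      (latticeBox n k p ∩ frontier Pbar).Nonempty} with hS_def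
    have hSsub : ∀ F : Finset (Fin n → ℝ), ↑F ⊆ S → (F.card : ℝ) ≤ C * (k:ℝ)^(n-1) :=
      fun F hF => hC k hk F (fun p hp => hF hp)
    have hfin : S.Finite := by
      by_contra hinf
      obtain ⟨F, hFsub, hFcard⟩ :=
        Set.Infinite.exists_subset_card_eq hinf (⌈C * (k:ℝ)^(n-1)⌉₊ + 1)
      have h1 := hSsub F hFsub
      rw [hFcard] at h1
      have h2 : C * (k:ℝ)^(n-1) ≤ (⌈C * (k:ℝ)^(n-1)⌉₊ : ℝ) := Nat.le_ceil _
      push_cast at h1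
      linarith
    have hbound1 : ((S.ncard : ℝ)) ≤ C * (k:ℝ)^(n-1) := by
      have hcoe : ↑hfin.toFinset ⊆ S := by
        intro p hp
        rwa [Set.Finite.coe_toFinset] at hp
      have := hSsub hfin.toFinset hcoe
      rwa [Set.ncard_eq_toFinset_card S hfin]
    refine ⟨hbound1, ?_⟩
    have hsub2 : facePts n k Pbar ⊆ S := by
      rintro p ⟨hpP, hlat, hnots, -⟩
      refine ⟨hlat, ?_⟩
      have hbox_conv : Convex ℝ (latticeBox n k p) := convex_Icc _ _
      have hpmem : p ∈ latticeBox n k p :=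
        ⟨le_refl p, fun i => le_add_of_nonneg_right (by positivity)⟩
      have h1 : (latticeBox n k p ∩ Pbar).Nonempty := ⟨p, hpmem, hpP⟩
      have h2 : (latticeBox n k p \ Pbar).Nonempty := by
        obtain ⟨x, hx1, hx2⟩ := Set.not_subset.1 hnots
        exact ⟨x, hx1, hx2⟩
      exact preconn_inter_frontier hbox_conv.isPreconnected h1 h2
    have hle := Set.ncard_le_ncard hsub2 hfin
    calc ((facePts n k Pbar).ncard : ℝ) ≤ (S.ncard : ℝ) := Nat.cast_le.2 hle
      _ ≤ C * (k:ℝ)^(n-1) := hbound1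
end
end
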